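/- Define Q : ℝ → ℝ by Q(x) = (3 / cosh²(2x))^{1/4}. Then Q is twice differentiable on ℝ and satisfies the ground state equation Q''(x) + Q(x)⁵ − Q(x) = 0 for every x ∈ ℝ. -/

import Mathlib

/-- The ground state `Q(x) = (3 / cosh²(2x))^(1/4)` of the 1D critical focusing NLS. -/
noncomputable def groundState (x : ℝ) : ℝ :=
  (3 / (Real.cosh (2 * x)) ^ 2) ^ ((1 : ℝ) / 4)

noncomputable def gsA : ℝ := (3 : ℝ) ^ ((1 : ℝ) / 4)

lemma gsA_pow : gsA ^ 5 = 3 * gsA := by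
  have h4 : gsA ^ 4 = 3 := by
    rw [gsA, ← Real.rpow_natCast ((3:ℝ) ^ ((1:ℝ)/4)) 4, ← Real.rpow_mul (by norm_num)]
    norm_num
  calc gsA ^ 5 = gsA ^ 4 * gsA := by ring
  _ = 3 * gsA := by rw [h4]

lemma groundState_eq (x : ℝ) :
    groundState x = gsA * Real.cosh (2 * x) ^ (-(1/2) : ℝ) := by
  have hc : (0:ℝ) < Real.cosh (2 * x) := Real.cosh_pos _
  rw [groundState, gsA, Real.div_rpow (by norm_num) (by positivity),
    ← Real.rpow_natCast (Real.cosh (2*x)) 2, ← Real.rpow_mul hc.le,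
    div_eq_mul_inv, ← Real.rpow_neg hc.le]
  norm_num

lemma gs_hcosh (x : ℝ) : HasDerivAt (fun x => Real.cosh (2 * x)) (2 * Real.sinh (2 * x)) x := by
  have h := ((hasDerivAt_id' (𝕜 := ℝ) x).const_mul 2).cosh
  convert h using 1; ring

lemma gs_hsinh (x : ℝ) : HasDerivAt (fun x => Real.sinh (2 * x)) (2 * Real.cosh (2 * x)) x := by
  have h := ((hasDerivAt_id' (𝕜 := ℝ) x).const_mul 2).sinh
  convert h using 1; ring

lemma gs_hd1 (x : ℝ) : HasDerivAt groundState
    (-gsA * (Real.sinh (2 * x) * Real.cosh (2 * x) ^ (-(3/2) : ℝ))) x := by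
  have hc : (0:ℝ) < Real.cosh (2 * x) := Real.cosh_pos _
  have h := ((gs_hcosh x).rpow_const (p := (-(1/2) : ℝ)) (Or.inl hc.ne')).const_mul gsA
  have he : groundState = fun x => gsA * Real.cosh (2 * x) ^ (-(1/2) : ℝ) :=
    funext groundState_eq
  rw [he]
  refine h.congr_deriv ?_
  have h32 : (-(1/2) : ℝ) - 1 = -(3/2) := by norm_num
  rw [h32]; ring

lemma gs_deriv : deriv groundState =
    fun x => -gsA * (Real.sinh (2 * x) * Real.cosh (2 * x) ^ (-(3/2) : ℝ)) :=
  funext fun x => (gs_hd1 x).deriv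

lemma gs_hd2 (x : ℝ) : HasDerivAt (deriv groundState)
    (gsA * (3 * Real.sinh (2 * x) ^ 2 * Real.cosh (2 * x) ^ (-(5/2) : ℝ)
      - 2 * Real.cosh (2 * x) ^ (-(1/2) : ℝ))) x := by
  have hc : (0:ℝ) < Real.cosh (2 * x) := Real.cosh_pos _
  have h := (((gs_hsinh x).mul
      ((gs_hcosh x).rpow_const (p := (-(3/2) : ℝ)) (Or.inl hc.ne'))).const_mul (-gsA))
  rw [gs_deriv]
  refine h.congr_deriv ?_
  have h52 : (-(3/2) : ℝ) - 1 = -(5/2) := by norm_num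
  rw [h52]
  have hcc : Real.cosh (2*x) * Real.cosh (2*x) ^ (-(3/2) : ℝ)
      = Real.cosh (2*x) ^ (-(1/2) : ℝ) := by
    nth_rewrite 1 [← Real.rpow_one (Real.cosh (2*x))]
    rw [← Real.rpow_add hc]; norm_num
  linear_combination (-2 * gsA) * hcc

/-- The ground state `Q(x) = (3 / cosh²(2x))^(1/4)` is twice differentiable on `ℝ`
and satisfies the ground state equation `Q'' + Q⁵ - Q = 0`. -/
theorem groundState_satisfies_ground_state_eq :
    (Differentiable ℝ groundState ∧ Differentiable ℝ (deriv groundState)) ∧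
      ∀ x : ℝ,
        deriv (deriv groundState) x + (groundState x) ^ 5 - groundState x = 0 := by
  refine ⟨⟨fun x => (gs_hd1 x).differentiableAt, fun x => (gs_hd2 x).differentiableAt⟩, ?_⟩
  intro x
  have hc : (0:ℝ) < Real.cosh (2 * x) := Real.cosh_pos _
  rw [(gs_hd2 x).deriv, groundState_eq]
  have hs : Real.sinh (2*x) ^ 2 = Real.cosh (2*x) ^ 2 - 1 := Real.sinh_sq _
  have h5 : (gsA * Real.cosh (2*x) ^ (-(1/2) : ℝ)) ^ 5
      = 3 * gsA * Real.cosh (2*x) ^ (-(5/2) : ℝ) := by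
    rw [mul_pow, gsA_pow, ← Real.rpow_natCast (Real.cosh (2*x) ^ (-(1/2):ℝ)) 5,
      ← Real.rpow_mul hc.le]
    norm_num
  have hcv : Real.cosh (2*x) ^ 2 * Real.cosh (2*x) ^ (-(5/2) : ℝ)
      = Real.cosh (2*x) ^ (-(1/2) : ℝ) := by
    rw [← Real.rpow_natCast (Real.cosh (2*x)) 2, ← Real.rpow_add hc]
    norm_num
  rw [h5, hs]
  linear_combination (3 * gsA) * hcv
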